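/- Let E be an equational system and > a reduction order total on ground terms, such that for every equation s ≈ t in E either s > t or t ≈ s ∈ E. If for every extended critical pair s ≈ t in ECP_>(E), either s and t are joinable with respect to E^>, or s ≈ t is an instance of an equation in the symmetric closure of E, then the ordered rewrite system E^> is ground confluent (confluent on ground terms). -/

import Mathlib

/-- First-order terms over a signature `F` with natural-number variables. -/
inductive Term (F : Type) : Type
  | var : ℕ → Term F
  | fn : F → List (Term F) → Term F

namespace Term

mutual
/-- Application of a substitution to a term. -/
def subst {F : Type} (σ : ℕ → Term F) : Term F → Term F
  | var x => σ x
  | fn f ts => fn f (substL σ ts)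
/-- Application of a substitution to a list of terms. -/
def substL {F : Type} (σ : ℕ → Term F) : List (Term F) → List (Term F)
  | [] => []
  | t :: ts => subst σ t :: substL σ ts
end

/-- Ground terms: terms without variables. -/
inductive IsGround {F : Type} : Term F → Prop
  | fn : ∀ (f : F) (ts : List (Term F)), (∀ t ∈ ts, IsGround t) → IsGround (fn f ts)

/-- Well-formed terms with respect to an arity function. -/
inductive WF {F : Type} (ar : F → ℕ) : Term F → Prop
  | var : ∀ x, WF ar (var x)
  | fn : ∀ (f : F) (ts : List (Term F)), ts.length = ar f →
      (∀ t ∈ ts, WF ar t) → WF ar (fn f ts)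

/-- The variable `x` occurs in a term. -/
inductive Occurs {F : Type} (x : ℕ) : Term F → Prop
  | var : Occurs x (var x)
  | fn : ∀ {f ts t}, t ∈ ts → Occurs x t → Occurs x (fn f ts)

end Term

open Term

/-- A substitution is a renaming (variable permutation) if it is given by a
bijection on variables. -/
def IsRenaming {F : Type} (π : ℕ → Term F) : Prop :=
  ∃ ρ : ℕ ≃ ℕ, ∀ x, π x = Term.var (ρ x)

/-- One-step rewrite relation generated by a set of rules: closure of the
rules under substitutions and contexts. -/
inductive Rew {F : Type} (R : Set (Term F × Term F)) : Term F → Term F → Prop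
  | rule : ∀ {l r : Term F}, (l, r) ∈ R → ∀ (σ : ℕ → Term F),
      Rew R (subst σ l) (subst σ r)
  | ctxt : ∀ {s t : Term F} (f : F) (as bs : List (Term F)), Rew R s t →
      Rew R (fn f (as ++ s :: bs)) (fn f (as ++ t :: bs))

/-- Symmetric closure of a set of equations. -/
def symcl {F : Type} (E : Set (Term F × Term F)) : Set (Term F × Term F) :=
  E ∪ {p | (p.2, p.1) ∈ E}

/-- `E^>`: all orientable instances of equations in the symmetric closure of `E`. -/
def ordInst {F : Type} (gt : Term F → Term F → Prop)
    (E : Set (Term F × Term F)) : Set (Term F × Term F) :=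
  {p | ∃ (u v : Term F) (σ : ℕ → Term F), (u, v) ∈ symcl E ∧
    p = (subst σ u, subst σ v) ∧ gt (subst σ u) (subst σ v)}

/-- Many-step rewriting. -/
def RStar {F : Type} (S : Set (Term F × Term F)) : Term F → Term F → Prop :=
  Relation.ReflTransGen (Rew S)

/-- Conversion: reflexive-transitive closure of rewriting in both directions. -/
def Conv {F : Type} (S : Set (Term F × Term F)) : Term F → Term F → Prop :=
  Relation.ReflTransGen (fun a b => Rew S a b ∨ Rew S b a)

/-- Joinability. -/
def Joinable {F : Type} (S : Set (Term F × Term F)) (s t : Term F) : Prop :=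
  ∃ u, RStar S s u ∧ RStar S t u

/-- Termination of an abstract relation. -/
def Terminating {A : Type} (r : A → A → Prop) : Prop :=
  WellFounded (fun a b => r b a)

/-- A reduction order: well-founded strict order on terms closed under
contexts and substitutions. -/
structure RedOrder (F : Type) where
  gt : Term F → Term F → Prop
  wf : WellFounded fun s t => gt t s
  trans : ∀ {s t u}, gt s t → gt t u → gt s u
  irrefl : ∀ s, ¬ gt s s
  subst_mono : ∀ {s t} (σ : ℕ → Term F), gt s t → gt (subst σ s) (subst σ t)
  ctxt_mono : ∀ {s t} (f : F) (as bs : List (Term F)), gt s t →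
      gt (fn f (as ++ s :: bs)) (fn f (as ++ t :: bs))

/-- Ground-totality of an order. -/
def GroundTotal {F : Type} (gt : Term F → Term F → Prop) : Prop :=
  ∀ s t : Term F, IsGround s → IsGround t → s ≠ t → gt s t ∨ gt t s

/-- Subterm at a position. -/
inductive SubtAt {F : Type} : Term F → List ℕ → Term F → Prop
  | refl : ∀ t, SubtAt t [] t
  | step : ∀ {f : F} {ts : List (Term F)} {i u p v},
      ts[(i : ℕ)]? = some u → SubtAt u p v → SubtAt (fn f ts) (i :: p) v

/-- Replacement of the subterm at a position. -/
inductive ReplAt {F : Type} : Term F → List ℕ → Term F → Term F → Prop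
  | refl : ∀ t u, ReplAt t [] u u
  | step : ∀ {f : F} {ts : List (Term F)} {i u p v u'},
      ts[(i : ℕ)]? = some u → ReplAt u p v u' →
      ReplAt (fn f ts) (i :: p) v (fn f (ts.set i u'))

/-- Extended critical pairs of a set of equations w.r.t. an order. -/
def ECP {F : Type} (gt : Term F → Term F → Prop)
    (E : Set (Term F × Term F)) : Set (Term F × Term F) :=
  {p | ∃ (e₁ e₂ : Term F × Term F) (π₁ π₂ μ : ℕ → Term F)
        (pos : List ℕ) (lsub l₂c : Term F),
    e₁ ∈ symcl E ∧ e₂ ∈ symcl E ∧ IsRenaming π₁ ∧ IsRenaming π₂ ∧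
    -- the variants are variable disjoint
    (∀ x, (Occurs x (subst π₁ e₁.1) ∨ Occurs x (subst π₁ e₁.2)) →
          ¬ (Occurs x (subst π₂ e₂.1) ∨ Occurs x (subst π₂ e₂.2))) ∧
    -- a function-symbol position of l₂
    SubtAt (subst π₂ e₂.1) pos lsub ∧ (∀ x, lsub ≠ Term.var x) ∧
    -- μ is a most general unifier of l₁ and l₂|_pos
    subst μ (subst π₁ e₁.1) = subst μ lsub ∧
    (∀ θ : ℕ → Term F, subst θ (subst π₁ e₁.1) = subst θ lsub →
      ∃ δ : ℕ → Term F, ∀ x, θ x = subst δ (subst μ (Term.var x))) ∧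
    -- orientation conditions
    ¬ gt (subst μ (subst π₁ e₁.2)) (subst μ (subst π₁ e₁.1)) ∧
    ¬ gt (subst μ (subst π₂ e₂.2)) (subst μ (subst π₂ e₂.1)) ∧
    -- the extended critical pair l₂[r₁]_pos μ ≈ r₂ μ
    ReplAt (subst π₂ e₂.1) pos (subst π₁ e₁.2) l₂c ∧
    p = (subst μ l₂c, subst μ (subst π₂ e₂.2))}

/-- The inference system oKB of ordered completion. -/
inductive OKB {F : Type} (gt : Term F → Term F → Prop) :
    Set (Term F × Term F) × Set (Term F × Term F) →
    Set (Term F × Term F) × Set (Term F × Term F) → Prop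
  | deduce : ∀ E R (s t u : Term F) (π : ℕ → Term F), IsRenaming π →
      Rew (R ∪ E) u s → Rew (R ∪ E) u t →
      OKB gt (E, R) (insert (subst π s, subst π t) E, R)
  | orient_lr : ∀ E R (s t : Term F) (π : ℕ → Term F), IsRenaming π → gt s t →
      OKB gt (insert (s, t) E, R) (E, insert (subst π s, subst π t) R)
  | orient_rl : ∀ E R (s t : Term F) (π : ℕ → Term F), IsRenaming π → gt t s →
      OKB gt (insert (s, t) E, R) (E, insert (subst π t, subst π s) R)
  | delete : ∀ E R (s : Term F), OKB gt (insert (s, s) E, R) (E, R)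
  | compose : ∀ E R (s t u : Term F) (π : ℕ → Term F), IsRenaming π →
      Rew (insert (s, t) R ∪ ordInst gt E) t u →
      OKB gt (E, insert (s, t) R) (E, insert (subst π s, subst π u) R)
  | simplify_l : ∀ E R (s t u : Term F) (π : ℕ → Term F), IsRenaming π →
      Rew (R ∪ ordInst gt (insert (s, t) E)) s u →
      OKB gt (insert (s, t) E, R) (insert (subst π u, subst π t) E, R)
  | simplify_r : ∀ E R (s t u : Term F) (π : ℕ → Term F), IsRenaming π →
      Rew (R ∪ ordInst gt (insert (s, t) E)) t u →
      OKB gt (insert (s, t) E, R) (insert (subst π s, subst π u) E, R)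
  | collapse : ∀ E R (s t u : Term F) (π : ℕ → Term F), IsRenaming π →
      Rew (insert (t, s) R ∪ ordInst gt E) t u →
      OKB gt (E, insert (t, s) R) (insert (subst π u, subst π s) E, R)

/-- Lexicographic extension of a relation to (equal-length) lists. -/
inductive LexExt {A : Type} (r : A → A → Prop) : List A → List A → Prop
  | head : ∀ {a b : A} {as bs : List A}, r a b → as.length = bs.length →
      LexExt r (a :: as) (b :: bs)
  | tail : ∀ {a : A} {as bs : List A}, LexExt r as bs →
      LexExt r (a :: as) (a :: bs)

/-- The lexicographic path order induced by a precedence. -/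
inductive LPO {F : Type} (p : F → F → Prop) : Term F → Term F → Prop
  | sub : ∀ {f ss s t}, s ∈ ss → LPO p s t → LPO p (fn f ss) t
  | subeq : ∀ {f ss t}, t ∈ ss → LPO p (fn f ss) t
  | prec : ∀ {f g ss ts}, p f g → (∀ t ∈ ts, LPO p (fn f ss) t) →
      LPO p (fn f ss) (fn g ts)
  | lex : ∀ {f ss ts}, (∀ t ∈ ts, LPO p (fn f ss) t) → LexExt (LPO p) ss ts →
      LPO p (fn f ss) (fn f ts)

mutual
/-- Weight of a term. -/
def wt {F : Type} (w : F → ℕ) (w0 : ℕ) : Term F → ℕ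
  | Term.var _ => w0
  | Term.fn f ts => w f + wtL w w0 ts
/-- Sum of the weights of a list of terms. -/
def wtL {F : Type} (w : F → ℕ) (w0 : ℕ) : List (Term F) → ℕ
  | [] => 0
  | t :: ts => wt w w0 t + wtL w w0 ts
end

/-- The Knuth–Bendix order on ground terms. -/
inductive KBO {F : Type} (p : F → F → Prop) (w : F → ℕ) (w0 : ℕ) :
    Term F → Term F → Prop
  | wgt : ∀ {f g ss ts}, wt w w0 (fn f ss) > wt w w0 (fn g ts) →
      KBO p w w0 (fn f ss) (fn g ts)
  | prec : ∀ {f g ss ts}, wt w w0 (fn f ss) = wt w w0 (fn g ts) → p f g →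
      KBO p w w0 (fn f ss) (fn g ts)
  | lex : ∀ {f ss ts}, wt w w0 (fn f ss) = wt w w0 (fn f ts) →
      LexExt (KBO p w w0) ss ts → KBO p w w0 (fn f ss) (fn f ts)

/-- Admissibility of a weight function for a precedence. -/
def Admissible {F : Type} (ar : F → ℕ) (p : F → F → Prop)
    (w : F → ℕ) (w0 : ℕ) : Prop :=
  0 < w0 ∧ (∀ c, ar c = 0 → w0 ≤ w c) ∧
  (∀ f, ar f = 1 → w f = 0 → ∀ g, g ≠ f → p f g)

section AuxLemmas
variable {F : Type}
@[simp] theorem subst_var_def (σ : ℕ → Term F) (x : ℕ) : subst σ (Term.var x) = σ x := rfl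
@[simp] theorem subst_fn_def (σ : ℕ → Term F) (f : F) (ts) :
    subst σ (Term.fn f ts) = Term.fn f (substL σ ts) := rfl
theorem substL_eq_map (σ : ℕ → Term F) : ∀ ts : List (Term F), substL σ ts = ts.map (subst σ)
  | [] => rfl
  | t :: ts => by rw [substL, List.map_cons, substL_eq_map]
mutual
theorem subst_comp (σ τ : ℕ → Term F) : ∀ t : Term F,
    subst σ (subst τ t) = subst (fun x => subst σ (τ x)) t
  | Term.var x => rfl
  | Term.fn f ts => by rw [subst_fn_def, subst_fn_def, subst_fn_def, substL_comp]
theorem substL_comp (σ τ : ℕ → Term F) : ∀ ts : List (Term F),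
    substL σ (substL τ ts) = substL (fun x => subst σ (τ x)) ts
  | [] => rfl
  | t :: ts => by rw [substL, substL, substL, subst_comp, substL_comp]
end
mutual
theorem subst_congr {σ σ' : ℕ → Term F} : ∀ {t : Term F},
    (∀ x, Occurs x t → σ x = σ' x) → subst σ t = subst σ' t
  | Term.var x, h => h x Occurs.var
  | Term.fn f ts, h => by
      rw [subst_fn_def, subst_fn_def, substL_congr (fun t ht x hx => h x (Occurs.fn ht hx))]
theorem substL_congr {σ σ' : ℕ → Term F} : ∀ {ts : List (Term F)},
    (∀ t ∈ ts, ∀ x, Occurs x t → σ x = σ' x) → substL σ ts = substL σ' ts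
  | [], _ => rfl
  | t :: ts, h => by
      rw [substL, substL, subst_congr (h t (List.mem_cons_self)),
        substL_congr (fun u hu x hx => h u (List.mem_cons_of_mem _ hu) x hx)]
end
mutual
theorem subst_id : ∀ t : Term F, subst Term.var t = t
  | Term.var x => rfl
  | Term.fn f ts => by rw [subst_fn_def, substL_id]
theorem substL_id : ∀ ts : List (Term F), substL Term.var ts = ts
  | [] => rfl
  | t :: ts => by rw [substL, subst_id, substL_id]
end
mutual
theorem occurs_subst {x : ℕ} {σ : ℕ → Term F} :
    ∀ {t : Term F}, Occurs x (subst σ t) → ∃ y, Occurs y t ∧ Occurs x (σ y)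
  | Term.var z, h => ⟨z, Occurs.var, h⟩
  | Term.fn f ts, h => by
      cases h with
      | fn hmem hocc =>
        obtain ⟨y, u, hu, hyu, hxy⟩ := occursL_subst hmem hocc
        exact ⟨y, Occurs.fn hu hyu, hxy⟩
theorem occursL_subst {x : ℕ} {σ : ℕ → Term F} {t' : Term F} :
    ∀ {ts : List (Term F)}, t' ∈ substL σ ts → Occurs x t' →
      ∃ y u, u ∈ ts ∧ Occurs y u ∧ Occurs x (σ y)
  | [], h, _ => absurd h List.not_mem_nil
  | t :: ts, h, hocc => by
      rw [substL] at h
      rcases List.mem_cons.1 h with h | h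
      · subst h
        obtain ⟨y, hy, hxy⟩ := occurs_subst hocc
        exact ⟨y, t, List.mem_cons_self, hy, hxy⟩
      · obtain ⟨y, u, hu, hyu, hxy⟩ := occursL_subst h hocc
        exact ⟨y, u, List.mem_cons_of_mem _ hu, hyu, hxy⟩
end
mutual
def size : Term F → ℕ
  | Term.var _ => 1
  | Term.fn _ ts => 1 + sizeL ts
def sizeL : List (Term F) → ℕ
  | [] => 0
  | t :: ts => size t + sizeL ts
end
theorem sizeL_mem {t : Term F} : ∀ {ts : List (Term F)}, t ∈ ts → size t ≤ sizeL ts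
  | [], h => absurd h List.not_mem_nil
  | u :: ts, h => by
      rcases List.mem_cons.1 h with rfl | h
      · rw [sizeL]; omega
      · have := sizeL_mem h; rw [sizeL]; omega
theorem size_subst_occurs {x : ℕ} {θ : ℕ → Term F} {t : Term F} (h : Occurs x t) :
    size (θ x) ≤ size (subst θ t) ∧ (t ≠ Term.var x → size (θ x) < size (subst θ t)) := by
  induction h with
  | var => exact ⟨le_refl _, fun h => absurd rfl h⟩
  | @fn f ts u hmem _ ih =>
      have h1 : subst θ u ∈ substL θ ts := by
        rw [substL_eq_map]; exact List.mem_map_of_mem hmem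
      have h2 := sizeL_mem h1
      have : size (subst θ (Term.fn f ts)) = 1 + sizeL (substL θ ts) := rfl
      constructor
      · omega
      · intro _; omega
mutual
def vars : Term F → Finset ℕ
  | Term.var x => {x}
  | Term.fn _ ts => varsL ts
def varsL : List (Term F) → Finset ℕ
  | [] => ∅
  | t :: ts => vars t ∪ varsL ts
end
mutual
theorem mem_vars : ∀ {t : Term F} {x : ℕ}, x ∈ vars t ↔ Occurs x t
  | Term.var y, x => by
      rw [vars, Finset.mem_singleton]
      constructor
      · rintro rfl; exact Occurs.var
      · rintro ⟨⟩; rfl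
  | Term.fn f ts, x => by
      rw [vars]
      constructor
      · intro h
        obtain ⟨u, hu, hx⟩ := (mem_varsL).1 h
        exact Occurs.fn hu hx
      · rintro ⟨⟩; exact mem_varsL.2 ⟨_, by assumption, by assumption⟩
theorem mem_varsL : ∀ {ts : List (Term F)} {x : ℕ},
    x ∈ varsL ts ↔ ∃ u ∈ ts, Occurs x u
  | [], x => by simp [varsL]
  | t :: ts, x => by
      rw [varsL, Finset.mem_union]
      constructor
      · rintro (h | h)
        · exact ⟨t, List.mem_cons_self, mem_vars.1 h⟩
        · obtain ⟨u, hu, hx⟩ := mem_varsL.1 h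
          exact ⟨u, List.mem_cons_of_mem _ hu, hx⟩
      · rintro ⟨u, hu, hx⟩
        rcases List.mem_cons.1 hu with h | hu
        · rw [h] at hx; exact Or.inl (mem_vars.2 hx)
        · exact Or.inr (mem_varsL.2 ⟨u, hu, hx⟩)
end

----------------- new material: unification -----------------

theorem substL_append (σ : ℕ → Term F) (as bs : List (Term F)) :
    substL σ (as ++ bs) = substL σ as ++ substL σ bs := by
  simp [substL_eq_map]

theorem length_substL (σ : ℕ → Term F) (as : List (Term F)) :
    (substL σ as).length = as.length := by simp [substL_eq_map]

theorem sizeL_append : ∀ as bs : List (Term F), sizeL (as ++ bs) = sizeL as + sizeL bs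
  | [], bs => by simp [sizeL]
  | a :: as, bs => by rw [List.cons_append, sizeL, sizeL, sizeL_append]; omega

theorem varsL_append : ∀ as bs : List (Term F), varsL (as ++ bs) = varsL as ∪ varsL bs
  | [], bs => by simp [varsL]
  | a :: as, bs => by rw [List.cons_append, varsL, varsL, varsL_append, Finset.union_assoc]

/-- The single-variable elimination substitution. -/
noncomputable def elim (x : ℕ) (t : Term F) : ℕ → Term F :=
  fun y => if y = x then t else Term.var y

theorem subst_elim_of_not_occurs {x : ℕ} {t u : Term F} (h : ¬ Occurs x u) :
    subst (elim x t) u = u := by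
  have : subst (elim x t) u = subst Term.var u := by
    refine subst_congr fun y hy => ?_
    rw [elim]
    rw [if_neg (fun hyx => h (by rw [← hyx]; exact hy))]
  rw [this, subst_id]

theorem subst_theta_elim {x : ℕ} {t : Term F} {θ : ℕ → Term F} (hx : θ x = subst θ t)
    (u : Term F) : subst θ (subst (elim x t) u) = subst θ u := by
  rw [subst_comp]
  exact subst_congr fun y _ => by
    rw [elim]; by_cases hy : y = x
    · subst hy; rw [if_pos rfl, hx]
    · rw [if_neg hy]; rfl

theorem substL_theta_elim {x : ℕ} {t : Term F} {θ : ℕ → Term F} (hx : θ x = subst θ t)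
    (us : List (Term F)) : substL θ (substL (elim x t) us) = substL θ us := by
  rw [substL_eq_map, substL_eq_map, substL_eq_map, List.map_map]
  exact List.map_congr_left fun u _ => subst_theta_elim hx u

theorem vars_subst_elim_subset {x : ℕ} {t : Term F} (ht : ¬ Occurs x t) (u : Term F) :
    vars (subst (elim x t) u) ⊆ (vars u ∪ vars t).erase x := by
  intro z hz
  obtain ⟨y, hyu, hzy⟩ := occurs_subst (mem_vars.1 hz)
  rw [elim] at hzy
  by_cases hy : y = x
  · rw [if_pos hy] at hzy
    refine Finset.mem_erase.2 ⟨fun hzx => ht (hzx ▸ mem_vars.1 (mem_vars.2 hzy)), ?_⟩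
    exact Finset.mem_union_right _ (mem_vars.2 hzy)
  · rw [if_neg hy] at hzy
    cases hzy
    exact Finset.mem_erase.2 ⟨hy, Finset.mem_union_left _ (mem_vars.2 hyu)⟩

theorem varsL_subst_elim_subset {x : ℕ} {t : Term F} (ht : ¬ Occurs x t)
    (us : List (Term F)) : varsL (substL (elim x t) us) ⊆ (varsL us ∪ vars t).erase x := by
  intro z hz
  obtain ⟨u', hu', hz'⟩ := mem_varsL.1 hz
  rw [substL_eq_map] at hu'
  obtain ⟨u, hu, rfl⟩ := List.mem_map.1 hu'
  have := vars_subst_elim_subset ht u (mem_vars.2 hz')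
  rw [Finset.mem_erase] at this ⊢
  refine ⟨this.1, ?_⟩
  rcases Finset.mem_union.1 this.2 with h | h
  · exact Finset.mem_union_left _ (mem_varsL.2 ⟨u, hu, mem_vars.1 h⟩)
  · exact Finset.mem_union_right _ h

/-- Most general unifier property for lists of terms. -/
def IsMguL (μ : ℕ → Term F) (as bs : List (Term F)) : Prop :=
  substL μ as = substL μ bs ∧
  ∀ θ : ℕ → Term F, substL θ as = substL θ bs → ∃ δ, ∀ x, θ x = subst δ (μ x)

theorem IsMguL_swap {μ : ℕ → Term F} {as bs : List (Term F)}
    (h : IsMguL μ as bs) : IsMguL μ bs as :=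
  ⟨h.1.symm, fun θ hθ => h.2 θ hθ.symm⟩

theorem elim_step {x : ℕ} {b : Term F} (hocc : ¬ Occurs x b) {μ' : ℕ → Term F}
    {as bs : List (Term F)}
    (hmgu : IsMguL μ' (substL (elim x b) as) (substL (elim x b) bs)) :
    IsMguL (fun y => subst μ' (elim x b y)) (Term.var x :: as) (b :: bs) := by
  set μ : ℕ → Term F := fun y => subst μ' (elim x b y) with hμ
  have hcompL : ∀ us : List (Term F), substL μ us = substL μ' (substL (elim x b) us) :=
    fun us => (substL_comp μ' (elim x b) us).symm
  have hcomp : ∀ u : Term F, subst μ u = subst μ' (subst (elim x b) u) :=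
    fun u => (subst_comp μ' (elim x b) u).symm
  have hμx : μ x = subst μ' b := by
    rw [hμ]; simp [elim]
  constructor
  · rw [substL, substL, hcompL, hcompL, hmgu.1, List.cons.injEq]
    refine ⟨?_, rfl⟩
    rw [subst_var_def, hμx, hcomp, subst_elim_of_not_occurs hocc]
  · intro θ hθ
    rw [substL, substL, List.cons.injEq, subst_var_def] at hθ
    obtain ⟨hθh, hθt⟩ := hθ
    have hθu : substL θ (substL (elim x b) as) = substL θ (substL (elim x b) bs) := by
      rw [substL_theta_elim hθh, substL_theta_elim hθh]; exact hθt
    obtain ⟨δ, hδ⟩ := hmgu.2 θ hθu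
    refine ⟨δ, fun y => ?_⟩
    by_cases hy : y = x
    · subst hy
      rw [hμx, subst_comp]
      rw [hθh]
      exact subst_congr fun z _ => hδ z
    · have : μ y = μ' y := by rw [hμ]; simp only [elim, if_neg hy]; rfl
      rw [this]; exact hδ y

theorem mgu_exists_aux : ∀ (k n : ℕ) (as bs : List (Term F)),
    (varsL (as ++ bs)).card ≤ k → sizeL as + sizeL bs ≤ n →
    (∃ θ : ℕ → Term F, substL θ as = substL θ bs) → ∃ μ, IsMguL μ as bs := by
  intro k
  induction k using Nat.strong_induction_on with
  | _ k ihk =>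
  intro n
  induction n using Nat.strong_induction_on with
  | _ n ihn =>
  intro as bs hk hn hθ
  obtain ⟨θ0, hθ0⟩ := hθ
  match as, bs with
  | [], [] =>
      exact ⟨Term.var, rfl, fun θ _ => ⟨θ, fun x => rfl⟩⟩
  | [], b :: bs => exact absurd hθ0 (by simp [substL, substL_eq_map])
  | a :: as, [] => exact absurd hθ0 (by simp [substL, substL_eq_map])
  | a :: as, b :: bs =>
      rw [substL, substL, List.cons.injEq] at hθ0
      obtain ⟨hθh, hθt⟩ := hθ0
      -- helper facts about measures
      have hvt : varsL (as ++ bs) ⊆ varsL ((a :: as) ++ (b :: bs)) := by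
        intro z hz
        obtain ⟨u, hu, hz⟩ := mem_varsL.1 hz
        refine mem_varsL.2 ⟨u, ?_, hz⟩
        simp only [List.mem_append, List.mem_cons] at hu ⊢
        tauto
      by_cases hab : a = b
      · -- drop equal heads
        subst hab
        have hsz : sizeL as + sizeL bs < n := by
          have h1 := hn
          rw [sizeL, sizeL] at h1
          have hpos : 0 < size a := by
            cases a with
            | var _ => rw [size]; omega
            | fn f ts => rw [size]; omega
          omega
        obtain ⟨μ, hμ1, hμ2⟩ := ihn (sizeL as + sizeL bs) hsz as bs
          (le_trans (Finset.card_le_card hvt) hk) (le_refl _) ⟨θ0, hθt⟩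
        refine ⟨μ, by rw [substL, substL, hμ1], fun θ hθ => ?_⟩
        rw [substL, substL, List.cons.injEq] at hθ
        exact hμ2 θ hθ.2
      · -- a ≠ b
        cases a with
        | var x =>
          simp only [subst_var_def] at hθh
          by_cases hocc : Occurs x b
          · exfalso
            have hbx : b ≠ Term.var x := fun h => hab (by rw [h])
            have hs := (size_subst_occurs (θ := θ0) hocc).2 hbx
            rw [← hθh] at hs
            exact lt_irrefl _ hs
          · -- eliminate x ↦ b
            have hx_mem : x ∈ varsL ((Term.var x :: as) ++ (b :: bs)) :=
              mem_varsL.2 ⟨Term.var x, by simp, Occurs.var⟩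
            have hb_sub : ∀ z, Occurs z b → z ∈ varsL ((Term.var x :: as) ++ (b :: bs)) :=
              fun z hz => mem_varsL.2 ⟨b, by simp, hz⟩
            have hsub : varsL (substL (elim x b) as ++ substL (elim x b) bs) ⊆
                (varsL ((Term.var x :: as) ++ (b :: bs))).erase x := by
              rw [varsL_append]
              intro z hz
              have key : ∀ us : List (Term F), us = as ∨ us = bs →
                  z ∈ varsL (substL (elim x b) us) →
                  z ∈ (varsL ((Term.var x :: as) ++ (b :: bs))).erase x := by
                intro us hus hzus
                have h1 := varsL_subst_elim_subset hocc us hzus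
                rw [Finset.mem_erase] at h1 ⊢
                refine ⟨h1.1, ?_⟩
                rcases Finset.mem_union.1 h1.2 with h2 | h2
                · obtain ⟨u, hu, hzo⟩ := mem_varsL.1 h2
                  refine mem_varsL.2 ⟨u, ?_, hzo⟩
                  rcases hus with rfl | rfl <;> simp [hu]
                · exact hb_sub z (mem_vars.1 h2)
              rcases Finset.mem_union.1 hz with h | h
              · exact key as (Or.inl rfl) h
              · exact key bs (Or.inr rfl) h
            have hcard : (varsL (substL (elim x b) as ++ substL (elim x b) bs)).card < k :=
              lt_of_le_of_lt (Finset.card_le_card hsub)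
                (lt_of_lt_of_le (Finset.card_erase_lt_of_mem hx_mem) hk)
            obtain ⟨μ', hμ'⟩ := ihk _ hcard
              (sizeL (substL (elim x b) as) + sizeL (substL (elim x b) bs))
              (substL (elim x b) as) (substL (elim x b) bs) (le_refl _) (le_refl _)
              ⟨θ0, by rw [substL_theta_elim hθh, substL_theta_elim hθh]; exact hθt⟩
            exact ⟨_, elim_step hocc hμ'⟩
        | fn f ss =>
          cases b with
          | var x =>
            simp only [subst_var_def] at hθh
            by_cases hocc : Occurs x (Term.fn f ss)
            · exfalso
              have hs := (size_subst_occurs (θ := θ0) hocc).2 (fun h => by cases h)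
              rw [hθh] at hs
              exact lt_irrefl _ hs
            · have hθh' : θ0 x = subst θ0 (Term.fn f ss) := hθh.symm
              have hx_mem : x ∈ varsL ((Term.fn f ss :: as) ++ (Term.var x :: bs)) :=
                mem_varsL.2 ⟨Term.var x, by simp, Occurs.var⟩
              have ha_sub : ∀ z, Occurs z (Term.fn f ss) →
                  z ∈ varsL ((Term.fn f ss :: as) ++ (Term.var x :: bs)) :=
                fun z hz => mem_varsL.2 ⟨Term.fn f ss, by simp, hz⟩
              have hsub : varsL (substL (elim x (Term.fn f ss)) bs ++
                    substL (elim x (Term.fn f ss)) as) ⊆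
                  (varsL ((Term.fn f ss :: as) ++ (Term.var x :: bs))).erase x := by
                rw [varsL_append]
                intro z hz
                have key : ∀ us : List (Term F), us = as ∨ us = bs →
                    z ∈ varsL (substL (elim x (Term.fn f ss)) us) →
                    z ∈ (varsL ((Term.fn f ss :: as) ++ (Term.var x :: bs))).erase x := by
                  intro us hus hzus
                  have h1 := varsL_subst_elim_subset hocc us hzus
                  rw [Finset.mem_erase] at h1 ⊢
                  refine ⟨h1.1, ?_⟩
                  rcases Finset.mem_union.1 h1.2 with h2 | h2
                  · obtain ⟨u, hu, hzo⟩ := mem_varsL.1 h2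
                    refine mem_varsL.2 ⟨u, ?_, hzo⟩
                    rcases hus with rfl | rfl <;> simp [hu]
                  · exact ha_sub z (mem_vars.1 h2)
                rcases Finset.mem_union.1 hz with h | h
                · exact key bs (Or.inr rfl) h
                · exact key as (Or.inl rfl) h
              have hcard : (varsL (substL (elim x (Term.fn f ss)) bs ++
                  substL (elim x (Term.fn f ss)) as)).card < k :=
                lt_of_le_of_lt (Finset.card_le_card hsub)
                  (lt_of_lt_of_le (Finset.card_erase_lt_of_mem hx_mem) hk)
              obtain ⟨μ', hμ'⟩ := ihk _ hcard
                (sizeL (substL (elim x (Term.fn f ss)) bs) +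
                  sizeL (substL (elim x (Term.fn f ss)) as))
                (substL (elim x (Term.fn f ss)) bs) (substL (elim x (Term.fn f ss)) as)
                (le_refl _) (le_refl _)
                ⟨θ0, by rw [substL_theta_elim hθh', substL_theta_elim hθh']; exact hθt.symm⟩
              exact ⟨_, IsMguL_swap (elim_step hocc hμ')⟩
          | fn g ts =>
            simp only [subst_fn_def, Term.fn.injEq] at hθh
            obtain ⟨rfl, h2⟩ := hθh
            have hlen : ss.length = ts.length := by
              have := congrArg List.length h2
              rwa [length_substL, length_substL] at this
            have happ : ∀ σ : ℕ → Term F,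
                substL σ (ss ++ as) = substL σ (ts ++ bs) ↔
                (substL σ ss = substL σ ts ∧ substL σ as = substL σ bs) := by
              intro σ
              rw [substL_append, substL_append]
              constructor
              · intro h
                exact List.append_inj h (by rw [length_substL, length_substL, hlen])
              · rintro ⟨h1, h2⟩; rw [h1, h2]
            have hvsub : varsL ((ss ++ as) ++ (ts ++ bs)) ⊆
                varsL ((Term.fn f ss :: as) ++ (Term.fn f ts :: bs)) := by
              intro z hz
              obtain ⟨u, hu, hzo⟩ := mem_varsL.1 hz
              simp only [List.mem_append] at hu
              rcases hu with (hu | hu) | (hu | hu)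
              · exact mem_varsL.2 ⟨Term.fn f ss, by simp, Occurs.fn hu hzo⟩
              · exact mem_varsL.2 ⟨u, by simp [hu], hzo⟩
              · exact mem_varsL.2 ⟨Term.fn f ts, by simp, Occurs.fn hu hzo⟩
              · exact mem_varsL.2 ⟨u, by simp [hu], hzo⟩
            have hsz : sizeL (ss ++ as) + sizeL (ts ++ bs) < n := by
              rw [sizeL_append, sizeL_append]
              have e1 : sizeL (Term.fn f ss :: as) = 1 + sizeL ss + sizeL as := by
                rw [sizeL, size]
              have e2 : sizeL (Term.fn f ts :: bs) = 1 + sizeL ts + sizeL bs := by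
                rw [sizeL, size]
              omega
            obtain ⟨μ', hμ'⟩ := ihn _ hsz (ss ++ as) (ts ++ bs)
              (le_trans (Finset.card_le_card hvsub) hk) (le_refl _)
              ⟨θ0, (happ θ0).2 ⟨h2, hθt⟩⟩
            have h3 := (happ μ').1 hμ'.1
            refine ⟨μ', ?_, fun θ hθ => ?_⟩
            · rw [substL, substL, subst_fn_def, subst_fn_def, h3.1, h3.2]
            · rw [substL, substL, List.cons.injEq, subst_fn_def, subst_fn_def,
                Term.fn.injEq] at hθ
              exact hμ'.2 θ ((happ θ).2 ⟨hθ.1.2, hθ.2⟩)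

theorem mgu_exists {a b : Term F} (h : ∃ θ : ℕ → Term F, subst θ a = subst θ b) :
    ∃ μ : ℕ → Term F, subst μ a = subst μ b ∧
      ∀ θ : ℕ → Term F, subst θ a = subst θ b → ∃ δ, ∀ x, θ x = subst δ (μ x) := by
  have hs : ∀ (σ : ℕ → Term F), substL σ [a] = substL σ [b] ↔ subst σ a = subst σ b := by
    intro σ
    constructor
    · intro hh; injection hh
    · intro hh; simp [substL, hh]
  obtain ⟨θ0, hθ0⟩ := h
  obtain ⟨μ, hμ1, hμ2⟩ := mgu_exists_aux (varsL ([a] ++ [b])).card (sizeL [a] + sizeL [b])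
    [a] [b] (le_refl _) (le_refl _) ⟨θ0, (hs θ0).2 hθ0⟩
  exact ⟨μ, (hs μ).1 hμ1, fun θ hθ => hμ2 θ ((hs θ).2 hθ)⟩

end AuxLemmas

section RewLemmas
variable {F : Type}

theorem symcl_symm {E : Set (Term F × Term F)} {u v : Term F}
    (h : (u, v) ∈ symcl E) : (v, u) ∈ symcl E := by
  rcases h with h | h
  · exact Or.inr h
  · exact Or.inl h

/-- A root rewrite step of the ordered rewrite system. -/
def RootStep (gt : Term F → Term F → Prop) (E : Set (Term F × Term F))
    (d e : Term F) : Prop :=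
  ∃ (u v : Term F) (κ : ℕ → Term F), (u, v) ∈ symcl E ∧ d = subst κ u ∧ e = subst κ v ∧ gt d e

theorem rew_of_rootstep {gt : Term F → Term F → Prop} {E : Set (Term F × Term F)}
    {d e : Term F} (h : RootStep gt E d e) : Rew (ordInst gt E) d e := by
  obtain ⟨u, v, κ, hmem, rfl, rfl, hgt⟩ := h
  have : (subst κ u, subst κ v) ∈ ordInst gt E := ⟨u, v, κ, hmem, rfl, hgt⟩
  have h2 := Rew.rule this Term.var
  rwa [subst_id, subst_id] at h2

theorem rew_subst {S : Set (Term F × Term F)} {s t : Term F} (σ : ℕ → Term F)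
    (h : Rew S s t) : Rew S (subst σ s) (subst σ t) := by
  induction h with
  | rule hmem τ =>
      rw [subst_comp, subst_comp]
      exact Rew.rule hmem _
  | ctxt f as bs _ ih =>
      rw [subst_fn_def, subst_fn_def, substL_eq_map, substL_eq_map, List.map_append,
        List.map_append, List.map_cons, List.map_cons]
      exact Rew.ctxt f _ _ ih

theorem rstar_subst {S : Set (Term F × Term F)} {s t : Term F} (σ : ℕ → Term F)
    (h : RStar S s t) : RStar S (subst σ s) (subst σ t) :=
  Relation.ReflTransGen.lift (subst σ) (fun _ _ h => rew_subst σ h) _ _ h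

theorem rew_gt {ro : RedOrder F} {E : Set (Term F × Term F)} {s t : Term F}
    (h : Rew (ordInst ro.gt E) s t) : ro.gt s t := by
  induction h with
  | rule hmem τ =>
      obtain ⟨u, v, κ, _, heq, hgt⟩ := hmem
      rw [Prod.ext_iff] at heq
      obtain ⟨h1, h2⟩ := heq
      simp only at h1 h2
      subst h1; subst h2
      exact ro.subst_mono τ hgt
  | ctxt f as bs _ ih => exact ro.ctxt_mono f as bs ih

theorem gt_asymm (ro : RedOrder F) {s t : Term F} (h : ro.gt s t) : ¬ ro.gt t s :=
  fun h2 => ro.irrefl s (ro.trans h h2)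

theorem rstar_gt_refl {ro : RedOrder F} {E : Set (Term F × Term F)} {s t : Term F}
    (h : RStar (ordInst ro.gt E) s t) : s = t ∨ ro.gt s t := by
  induction h with
  | refl => exact Or.inl rfl
  | tail _ hst ih =>
      rcases ih with rfl | ih
      · exact Or.inr (rew_gt hst)
      · exact Or.inr (ro.trans ih (rew_gt hst))

theorem rstar_ctxt_slot {S : Set (Term F × Term F)} {a b : Term F} (f : F)
    (as bs : List (Term F)) (h : RStar S a b) :
    RStar S (Term.fn f (as ++ a :: bs)) (Term.fn f (as ++ b :: bs)) :=
  Relation.ReflTransGen.lift (fun c => Term.fn f (as ++ c :: bs))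
    (fun _ _ h => Rew.ctxt f as bs h) _ _ h

theorem rstar_fn_aux {S : Set (Term F × Term F)} :
    ∀ {ls ms : List (Term F)}, List.Forall₂ (RStar S) ls ms →
      ∀ (f : F) (as : List (Term F)),
        RStar S (Term.fn f (as ++ ls)) (Term.fn f (as ++ ms)) := by
  intro ls ms h
  induction h with
  | nil => intro f as; exact Relation.ReflTransGen.refl
  | @cons a b ls' ms' hab _ ih =>
      intro f as
      have h1 : RStar S (Term.fn f (as ++ a :: ls')) (Term.fn f (as ++ b :: ls')) :=
        rstar_ctxt_slot f as ls' hab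
      have h2 := ih f (as ++ [b])
      rw [List.append_assoc, List.append_assoc] at h2
      exact h1.trans h2

theorem rstar_fn {S : Set (Term F × Term F)} {ls ms : List (Term F)}
    (h : List.Forall₂ (RStar S) ls ms) (f : F) :
    RStar S (Term.fn f ls) (Term.fn f ms) := by
  have := rstar_fn_aux h f []
  simpa using this

end RewLemmas

section PosLemmas
variable {F : Type}

mutual
theorem subst_rstar {S : Set (Term F × Term F)} {σ σ' : ℕ → Term F} :
    ∀ {t : Term F}, (∀ x, Occurs x t → RStar S (σ x) (σ' x)) →
      RStar S (subst σ t) (subst σ' t)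
  | Term.var x, h => h x Occurs.var
  | Term.fn f ts, h => by
      rw [subst_fn_def, subst_fn_def]
      exact rstar_fn (substL_forall₂ fun u hu x hx => h x (Occurs.fn hu hx)) f
theorem substL_forall₂ {S : Set (Term F × Term F)} {σ σ' : ℕ → Term F} :
    ∀ {ts : List (Term F)}, (∀ u ∈ ts, ∀ x, Occurs x u → RStar S (σ x) (σ' x)) →
      List.Forall₂ (RStar S) (substL σ ts) (substL σ' ts)
  | [], _ => List.Forall₂.nil
  | t :: ts, h => by
      rw [substL, substL]
      exact List.Forall₂.cons (subst_rstar fun x hx => h t (List.mem_cons_self) x hx)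
        (substL_forall₂ fun u hu x hx => h u (List.mem_cons_of_mem _ hu) x hx)
end

theorem get?_take_drop {α : Type _} : ∀ {ts : List α} {i : ℕ} {u : α},
    ts[i]? = some u → ts = ts.take i ++ u :: ts.drop (i + 1) ∧
      ∀ e, ts.set i e = ts.take i ++ e :: ts.drop (i + 1)
  | [], i, u, h => by simp at h
  | a :: ts, 0, u, h => by
      simp only [List.getElem?_cons_zero] at h
      injection h with h
      subst h
      exact ⟨rfl, fun e => rfl⟩
  | a :: ts, i + 1, u, h => by
      simp only [List.getElem?_cons_succ] at h
      obtain ⟨h1, h2⟩ := get?_take_drop h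
      refine ⟨?_, fun e => ?_⟩
      · show a :: ts = a :: (ts.take i ++ u :: ts.drop (i + 1))
        rw [← h1]
      · show a :: ts.set i e = a :: (ts.take i ++ e :: ts.drop (i + 1))
        rw [h2 e]

theorem set_eq_of_get? {α : Type _} {ts : List α} {i : ℕ} {u : α}
    (h : ts[i]? = some u) : ts.set i u = ts := by
  obtain ⟨h1, h2⟩ := get?_take_drop h
  rw [h2 u, ← h1]

theorem get?_substL {σ : ℕ → Term F} {ts : List (Term F)} {i : ℕ} {m : Term F}
    (h : (substL σ ts)[i]? = some m) : ∃ u, ts[i]? = some u ∧ m = subst σ u := by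
  rw [substL_eq_map, List.getElem?_map] at h
  cases hu : ts[i]? with
  | none => rw [hu] at h; simp at h
  | some u => rw [hu] at h; simp at h; exact ⟨u, rfl, h.symm⟩

theorem get?_substL_of {σ : ℕ → Term F} {ts : List (Term F)} {i : ℕ} {u : Term F}
    (h : ts[i]? = some u) : (substL σ ts)[i]? = some (subst σ u) := by
  rw [substL_eq_map, List.getElem?_map, h]; rfl

theorem substL_set (σ : ℕ → Term F) (ts : List (Term F)) (i : ℕ) (e : Term F) :
    substL σ (ts.set i e) = (substL σ ts).set i (subst σ e) := by
  simp [substL_eq_map, List.map_set]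

theorem replAt_det {t : Term F} {p : List ℕ} {e v₁ v₂ : Term F}
    (h1 : ReplAt t p e v₁) (h2 : ReplAt t p e v₂) : v₁ = v₂ := by
  induction h1 generalizing v₂ with
  | refl => cases h2; rfl
  | @step f ts i u p' v u' hget _ ih =>
      cases h2 with
      | step hget2 hrepl2 =>
        rw [hget] at hget2
        injection hget2 with hh
        subst hh
        rw [ih hrepl2]

theorem replAt_exists {t : Term F} {p : List ℕ} {d : Term F} (h : SubtAt t p d)
    (e : Term F) : ∃ v, ReplAt t p e v := by
  induction h generalizing e with
  | refl => exact ⟨e, ReplAt.refl _ _⟩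
  | @step f ts i u p' v hget _ ih =>
      obtain ⟨w, hw⟩ := ih e
      exact ⟨Term.fn f (ts.set i w), ReplAt.step hget hw⟩

theorem subtAt_subst {t : Term F} {p : List ℕ} {d : Term F} (σ : ℕ → Term F)
    (h : SubtAt t p d) : SubtAt (subst σ t) p (subst σ d) := by
  induction h with
  | refl => exact SubtAt.refl _
  | @step f ts i u p' v hget _ ih =>
      exact SubtAt.step (get?_substL_of hget) ih

theorem replAt_subst {t : Term F} {p : List ℕ} {e v : Term F} (σ : ℕ → Term F)
    (h : ReplAt t p e v) : ReplAt (subst σ t) p (subst σ e) (subst σ v) := by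
  induction h with
  | refl => exact ReplAt.refl _ _
  | @step f ts i u p' w u' hget _ ih =>
      rw [subst_fn_def, subst_fn_def, substL_set]
      exact ReplAt.step (get?_substL_of hget) ih

theorem subtAt_nil {t d : Term F} (h : SubtAt t [] d) : d = t := by
  cases h; rfl

theorem replAt_nil {t e v : Term F} (h : ReplAt t [] e v) : v = e := by
  cases h; rfl

theorem replAt_append_split {q : List ℕ} {e w : Term F} :
    ∀ {t m : Term F} {p : List ℕ}, SubtAt t p m → ReplAt m q e w →
      ∀ {v : Term F}, ReplAt t (p ++ q) e v → ReplAt t p w v := by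
  intro t m p h1
  induction h1 with
  | refl =>
      intro h2 v h3
      rw [List.nil_append] at h3
      rw [replAt_det h3 h2]
      exact ReplAt.refl _ _
  | @step f ts i u p' v' hget _ ih =>
      intro h2 v h3
      rw [List.cons_append] at h3
      cases h3 with
      | step hget2 hrepl2 =>
        rw [hget] at hget2
        injection hget2 with hh
        subst hh
        exact ReplAt.step hget (ih h2 hrepl2)

theorem occurs_of_subtAt {t : Term F} {p : List ℕ} {d : Term F} (h : SubtAt t p d)
    {x : ℕ} (hx : Occurs x d) : Occurs x t := by
  induction h with
  | refl => exact hx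
  | @step f ts i u p' v hget _ ih => exact Occurs.fn (List.mem_of_getElem? hget) (ih hx)

theorem occurs_pos {t : Term F} {x : ℕ} (h : Occurs x t) :
    ∃ p, SubtAt t p (Term.var x) := by
  induction h with
  | var => exact ⟨[], SubtAt.refl _⟩
  | @fn f ts u hmem _ ih =>
      obtain ⟨p, hp⟩ := ih
      obtain ⟨i, hi⟩ := List.getElem?_of_mem hmem
      exact ⟨i :: p, SubtAt.step hi hp⟩

/-- Positions of a substituted term either factor through a variable of the
pattern or hit a non-variable position of the pattern. -/
theorem subst_pos_decomp {σ : ℕ → Term F} :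
    ∀ {p : List ℕ} {l d : Term F}, SubtAt (subst σ l) p d →
      (∃ q₁ q₂ x, p = q₁ ++ q₂ ∧ SubtAt l q₁ (Term.var x) ∧ SubtAt (σ x) q₂ d) ∨
      (∃ l', SubtAt l p l' ∧ (∀ x, l' ≠ Term.var x) ∧ subst σ l' = d) := by
  intro p
  induction p with
  | nil =>
      intro l d h
      rw [subtAt_nil h]
      cases l with
      | var x => exact Or.inl ⟨[], [], x, rfl, SubtAt.refl _, SubtAt.refl _⟩
      | fn f ls => exact Or.inr ⟨Term.fn f ls, SubtAt.refl _, fun x h => (by cases h), rfl⟩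
  | cons i p' ih =>
      intro l d h
      cases l with
      | var x => exact Or.inl ⟨[], i :: p', x, rfl, SubtAt.refl _, h⟩
      | fn f ls =>
          rw [subst_fn_def] at h
          cases h with
          | step hget hsub =>
            obtain ⟨u, hu, rfl⟩ := get?_substL hget
            rcases ih hsub with ⟨q₁, q₂, x, rfl, hq1, hq2⟩ | ⟨l', hl', hnv, hde⟩
            · exact Or.inl ⟨i :: q₁, q₂, x, rfl, SubtAt.step hu hq1, hq2⟩
            · exact Or.inr ⟨l', SubtAt.step hu hl', hnv, hde⟩

end PosLemmas

section VarCond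
variable {F : Type}

/-- Replacement at a position, as a function. -/
def replF : List ℕ → Term F → Term F → Term F
  | [], _, e => e
  | i :: p, Term.fn f ts, e => Term.fn f (ts.set i (replF p (ts.getD i (Term.var 0)) e))
  | _ :: _, Term.var x, _ => Term.var x

theorem replF_replAt {t d : Term F} {p : List ℕ} (h : SubtAt t p d) (e : Term F) :
    ReplAt t p e (replF p t e) := by
  induction h generalizing e with
  | refl => exact ReplAt.refl _ _
  | @step f ts i u p' v hget _ ih =>
      have hgd : ts.getD i (Term.var 0) = u := by
        rw [List.getD_eq_getElem?_getD, hget]; rfl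
      rw [replF, hgd]
      exact ReplAt.step hget (ih e)

theorem replAt_self {t d : Term F} {p : List ℕ} (h : SubtAt t p d) : ReplAt t p d t := by
  induction h with
  | refl => exact ReplAt.refl _ _
  | @step f ts i u p' v hget _ ih =>
      have h2 := ReplAt.step (f := f) hget ih
      rwa [set_eq_of_get? hget] at h2

theorem gt_repl' (ro : RedOrder F) :
    ∀ {t : Term F} {p : List ℕ} {a v₁ : Term F}, ReplAt t p a v₁ →
      ∀ {b v₂ : Term F}, ro.gt a b → ReplAt t p b v₂ → ro.gt v₁ v₂ := by
  intro t p a v₁ h1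
  induction h1 with
  | refl => intro b v₂ hab h2; rw [replAt_nil h2]; exact hab
  | @step f ts i u p' v u' hget _ ih =>
      intro b v₂ hab h2
      cases h2 with
      | step hget2 hrepl2 =>
        rw [hget] at hget2
        injection hget2 with hh
        subst hh
        have hgt := ih hab hrepl2
        obtain ⟨hdec, hset⟩ := get?_take_drop hget
        rw [hset, hset]
        exact ro.ctxt_mono f _ _ hgt

theorem gt_repl (ro : RedOrder F) {a b : Term F} (hab : ro.gt a b)
    {t : Term F} {p : List ℕ} {v₁ v₂ : Term F}
    (h1 : ReplAt t p a v₁) (h2 : ReplAt t p b v₂) : ro.gt v₁ v₂ :=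
  gt_repl' ro h1 hab h2

/-- The variable condition: a reduction order cannot relate a term to one with
extra variables. -/
theorem occurs_of_gt (ro : RedOrder F) {s t : Term F} (h : ro.gt s t) {x : ℕ}
    (hx : Occurs x t) : Occurs x s := by
  by_contra hxs
  -- substitute x ↦ s
  set θ : ℕ → Term F := elim x s with hθ
  have hs : subst θ s = s := subst_elim_of_not_occurs hxs
  have hst : ro.gt s (subst θ t) := by
    have := ro.subst_mono θ h
    rwa [hs] at this
  obtain ⟨q, hq⟩ := occurs_pos hx
  have hq' : SubtAt (subst θ t) q s := by
    have := subtAt_subst θ hq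
    rwa [show subst θ (Term.var x) = s by rw [subst_var_def, hθ, elim, if_pos rfl]] at this
  set s' := subst θ t with hs'
  -- the replacement function at q in s'
  have hg : ∀ a : Term F, ReplAt s' q a (replF q s' a) := fun a => replF_replAt hq' a
  have hmono : ∀ a b : Term F, ro.gt a b → ro.gt (replF q s' a) (replF q s' b) :=
    fun a b hab => gt_repl ro hab (hg a) (hg b)
  have hgs : replF q s' s = s' := replAt_det (hg s) (replAt_self hq')
  -- infinite descent
  have descent : ∀ c : Term F, ro.gt c (replF q s' c) → False := by
    intro c
    induction c using ro.wf.induction with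
    | _ c ih =>
      intro hc
      exact ih (replF q s' c) hc (hmono c (replF q s' c) hc)
  have h2 := hmono s s' hst
  rw [hgs] at h2
  exact descent s' h2

theorem occurs_subst_of {x y : ℕ} {σ : ℕ → Term F} {t : Term F}
    (h : Occurs y t) (h2 : Occurs x (σ y)) : Occurs x (subst σ t) := by
  induction h with
  | var => exact h2
  | fn hmem _ ih =>
      rw [subst_fn_def]
      exact Occurs.fn (by rw [substL_eq_map]; exact List.mem_map_of_mem hmem) ih

theorem not_occurs_of_ground {t : Term F} (h : IsGround t) (x : ℕ) : ¬ Occurs x t := by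
  intro ho
  induction ho with
  | var => cases h
  | fn hmem _ ih => cases h with | fn f ts h2 => exact ih (h2 _ hmem)

mutual
theorem ground_of_not_occurs : ∀ {t : Term F}, (∀ x, ¬ Occurs x t) → IsGround t
  | Term.var x, h => absurd Occurs.var (h x)
  | Term.fn f ts, h =>
      IsGround.fn f ts (groundL_of_not_occurs fun x u hu ho => h x (Occurs.fn hu ho))
theorem groundL_of_not_occurs :
    ∀ {ts : List (Term F)}, (∀ x, ∀ u ∈ ts, ¬ Occurs x u) → ∀ t ∈ ts, IsGround t
  | [], _, t, ht => absurd ht List.not_mem_nil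
  | u :: ts, h, t, ht => by
      rcases List.mem_cons.1 ht with h' | ht
      · rw [h']; exact ground_of_not_occurs fun x => h x u (List.mem_cons_self)
      · exact groundL_of_not_occurs (fun x v hv => h x v (List.mem_cons_of_mem _ hv)) t ht
end

theorem ground_iff_no_occurs {t : Term F} : IsGround t ↔ ∀ x, ¬ Occurs x t :=
  ⟨fun h x => not_occurs_of_ground h x, ground_of_not_occurs⟩

theorem ground_of_gt (ro : RedOrder F) {s t : Term F} (h : ro.gt s t)
    (hs : IsGround s) : IsGround t :=
  ground_of_not_occurs fun x hx => not_occurs_of_ground hs x (occurs_of_gt ro h hx)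

theorem ground_rew {ro : RedOrder F} {E : Set (Term F × Term F)} {s t : Term F}
    (h : Rew (ordInst ro.gt E) s t) (hs : IsGround s) : IsGround t :=
  ground_of_gt ro (rew_gt h) hs

theorem ground_rstar {ro : RedOrder F} {E : Set (Term F × Term F)} {s t : Term F}
    (h : RStar (ordInst ro.gt E) s t) (hs : IsGround s) : IsGround t := by
  induction h with
  | refl => exact hs
  | tail _ h2 ih => exact ground_rew h2 ih

end VarCond

section RewPos
variable {F : Type}

theorem get?_append_len {α : Type _} (s : α) (bs : List α) :
    ∀ as : List α, (as ++ s :: bs)[as.length]? = some s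
  | [] => rfl
  | a :: as => get?_append_len s bs as

theorem set_append_len {α : Type _} (s e : α) (bs : List α) :
    ∀ as : List α, (as ++ s :: bs).set as.length e = as ++ e :: bs
  | [] => rfl
  | a :: as => by
      show a :: (as ++ s :: bs).set as.length e = a :: (as ++ e :: bs)
      rw [set_append_len s e bs as]

theorem rew_to_pos {ro : RedOrder F} {E : Set (Term F × Term F)} {s v : Term F}
    (h : Rew (ordInst ro.gt E) s v) :
    ∃ (p : List ℕ) (d e : Term F), SubtAt s p d ∧ ReplAt s p e v ∧ RootStep ro.gt E d e := by
  induction h with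
  | @rule l r hmem σ =>
      obtain ⟨u, w, κ₀, hsym, heq, hgt⟩ := hmem
      rw [Prod.ext_iff] at heq
      obtain ⟨h1, h2⟩ := heq
      simp only at h1 h2
      subst h1; subst h2
      refine ⟨[], _, _, SubtAt.refl _, ReplAt.refl _ _, u, w, fun x => subst σ (κ₀ x),
        hsym, ?_, ?_, ro.subst_mono σ hgt⟩
      · rw [subst_comp]
      · rw [subst_comp]
  | @ctxt s' t' f as bs _ ih =>
      obtain ⟨p, d, e, h1, h2, h3⟩ := ih
      refine ⟨as.length :: p, d, e, SubtAt.step (get?_append_len s' bs as) h1, ?_, h3⟩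
      have := ReplAt.step (f := f) (get?_append_len s' bs as) h2
      rwa [set_append_len] at this

theorem pos_to_rew {ro : RedOrder F} {E : Set (Term F × Term F)} :
    ∀ {s : Term F} {p : List ℕ} {d : Term F}, SubtAt s p d →
      ∀ {e v : Term F}, ReplAt s p e v → RootStep ro.gt E d e →
        Rew (ordInst ro.gt E) s v := by
  intro s p d h1
  induction h1 with
  | refl =>
      intro e v h2 h3
      rw [replAt_nil h2]
      exact rew_of_rootstep h3
  | @step f ts i u p' d' hget _ ih =>
      intro e v h2 h3
      cases h2 with
      | step hget2 hrepl2 =>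
        rw [hget] at hget2
        injection hget2 with hh
        subst hh
        have hrew := ih hrepl2 h3
        obtain ⟨hdec, hset⟩ := get?_take_drop hget
        rw [hset]
        conv_lhs => rw [hdec]
        exact Rew.ctxt f _ _ hrew

theorem rstar_repl_var {S : Set (Term F × Term F)} {σ σ' : ℕ → Term F} {x : ℕ} :
    ∀ {t : Term F} {q : List ℕ} {d : Term F}, SubtAt t q d → d = Term.var x →
      ∀ {w v : Term F}, ReplAt (subst σ t) q w v →
        (∀ y, Occurs y t → RStar S (σ y) (σ' y)) → RStar S w (σ' x) →
        RStar S v (subst σ' t) := by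
  intro t q d h1
  induction h1 with
  | refl =>
      rintro rfl w v h2 hocc hw
      rw [replAt_nil h2]
      exact hw
  | @step f ts i u p' d' hget hsub ih =>
      intro hd w v h2 hocc hw
      rw [subst_fn_def] at h2
      cases h2 with
      | @step _ _ _ m _ _ m' hget2 hrepl2 =>
        have hm := get?_substL_of (σ := σ) hget
        rw [hget2] at hm
        injection hm with hm
        subst hm
        have ih' : RStar S m' (subst σ' u) :=
          ih hd hrepl2 (fun y hy => hocc y (Occurs.fn (List.mem_of_getElem? hget) hy)) hw
        obtain ⟨hdec, hset⟩ := get?_take_drop (get?_substL_of (σ := σ) hget)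
        rw [hset]
        have htk : (substL σ ts).take i = substL σ (ts.take i) := by
          rw [substL_eq_map, substL_eq_map, List.map_take]
        have hdr : (substL σ ts).drop (i + 1) = substL σ (ts.drop (i + 1)) := by
          rw [substL_eq_map, substL_eq_map, List.map_drop]
        obtain ⟨hdec2, _⟩ := get?_take_drop hget
        have hrhs : substL σ' ts =
            substL σ' (ts.take i) ++ subst σ' u :: substL σ' (ts.drop (i + 1)) := by
          conv_lhs => rw [hdec2]
          rw [substL_eq_map, substL_eq_map, substL_eq_map, List.map_append, List.map_cons]
        rw [subst_fn_def, hrhs, htk, hdr]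
        refine rstar_fn (List.rel_append ?_ (List.Forall₂.cons ih' ?_)) f
        · exact substL_forall₂ fun a ha y hy =>
            hocc y (Occurs.fn (List.mem_of_mem_take ha) hy)
        · exact substL_forall₂ fun a ha y hy =>
            hocc y (Occurs.fn (List.mem_of_mem_drop ha) hy)

theorem joinable_symm {S : Set (Term F × Term F)} {s t : Term F}
    (h : Joinable S s t) : Joinable S t s := by
  obtain ⟨u, h1, h2⟩ := h
  exact ⟨u, h2, h1⟩

theorem joinable_subst {S : Set (Term F × Term F)} {s t : Term F} (σ : ℕ → Term F)
    (h : Joinable S s t) : Joinable S (subst σ s) (subst σ t) := by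
  obtain ⟨u, h1, h2⟩ := h
  exact ⟨subst σ u, rstar_subst σ h1, rstar_subst σ h2⟩

theorem joinable_of_rstar {S : Set (Term F × Term F)} {s t u : Term F}
    (h1 : RStar S s u) (h2 : RStar S t u) : Joinable S s t := ⟨u, h1, h2⟩

theorem joinable_rstar_congr {S : Set (Term F × Term F)} {s s' t t' : Term F}
    (hs : RStar S s s') (ht : RStar S t t') (h : Joinable S s' t') : Joinable S s t := by
  obtain ⟨u, h1, h2⟩ := h
  exact ⟨u, hs.trans h1, ht.trans h2⟩

end RewPos

section MainLemmas
variable {F : Type}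

/-- Swap the blocks `[0,N)` and `[N,2N)` of variables. -/
def swapFun (N : ℕ) : ℕ → ℕ := fun x => if x < N then x + N else if x < 2 * N then x - N else x

theorem swapFun_invol (N : ℕ) : Function.Involutive (swapFun N) := by
  intro x
  simp only [swapFun]
  split_ifs <;> omega

/-- The block swap as a permutation of variables. -/
noncomputable def swapPerm (N : ℕ) : ℕ ≃ ℕ := (swapFun_invol N).toPerm _

@[simp] theorem swapPerm_apply (N x : ℕ) : swapPerm N x = swapFun N x := rfl

theorem rule_normal {gt : Term F → Term F → Prop} {E : Set (Term F × Term F)}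
    {l₀ r₀ : Term F} (h : (l₀, r₀) ∈ ordInst gt E) : ∃ (l r : Term F) (κ : ℕ → Term F),
      (l, r) ∈ symcl E ∧ l₀ = subst κ l ∧ r₀ = subst κ r ∧ gt l₀ r₀ := by
  obtain ⟨u, w, κ₀, hsym, heq, hgt⟩ := h
  rw [Prod.ext_iff] at heq
  obtain ⟨h1, h2⟩ := heq
  simp only at h1 h2
  exact ⟨u, w, κ₀, hsym, h1, h2, by rw [h1, h2]; exact hgt⟩

/-- The key peak lemma: a root rewrite step versus an arbitrary rewrite step. -/
theorem root_peak (ro : RedOrder F) (hgt : GroundTotal ro.gt) (E : Set (Term F × Term F))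
    (hcp : ∀ s t : Term F, (s, t) ∈ ECP ro.gt E →
      Joinable (ordInst ro.gt E) s t ∨
      ∃ s' t' : Term F, (s', t') ∈ symcl E ∧
        ∃ σ : ℕ → Term F, s = subst σ s' ∧ t = subst σ t')
    {l r : Term F} {σ : ℕ → Term F} (hsym : (l, r) ∈ symcl E)
    (hlr : ro.gt (subst σ l) (subst σ r)) (hground : IsGround (subst σ l))
    {v : Term F} (hv : Rew (ordInst ro.gt E) (subst σ l) v) :
    Joinable (ordInst ro.gt E) (subst σ r) v := by
  set S := ordInst ro.gt E with hS
  set s : Term F := subst σ l with hsdef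
  set u : Term F := subst σ r with hudef
  have hgr_u : IsGround u := ground_of_gt ro hlr hground
  have hgr_v : IsGround v := ground_rew hv hground
  obtain ⟨p, d, e, hsub, hrepl, hroot⟩ := rew_to_pos hv
  obtain ⟨l₁, r₁, τ, hsym₁, hd, he, hde⟩ := hroot
  rcases subst_pos_decomp hsub with ⟨q₁, q₂, x, rfl, hq1, hq2⟩ | ⟨l', hl', hnv, hsl'⟩
  · -- variable overlap case
    set w : Term F := replF q₂ (σ x) e with hwdef
    have hw : ReplAt (σ x) q₂ e w := replF_replAt hq2 e
    have hstepw : Rew S (σ x) w := pos_to_rew hq2 hw ⟨l₁, r₁, τ, hsym₁, hd, he, hde⟩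
    set σ' : ℕ → Term F := fun y => if y = x then w else σ y with hσ'
    have hptw : ∀ y, Occurs y l ∨ Occurs y r → RStar S (σ y) (σ' y) := by
      intro y _
      by_cases hy : y = x
      · subst hy
        rw [hσ']
        simp only [if_pos rfl]
        exact Relation.ReflTransGen.single hstepw
      · rw [hσ']; simp only [if_neg hy]
        exact Relation.ReflTransGen.refl
    have hσ'x : σ' x = w := by rw [hσ']; simp
    have hsq1 : SubtAt s q₁ (σ x) := by
      have := subtAt_subst σ hq1
      rwa [subst_var_def] at this
    have hvrepl : ReplAt s q₁ w v := replAt_append_split hsq1 hw hrepl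
    have hv_to : RStar S v (subst σ' l) :=
      rstar_repl_var hq1 rfl hvrepl (fun y hy => hptw y (Or.inl hy))
        (by rw [hσ'x]; exact Relation.ReflTransGen.refl)
    have hu_to : RStar S u (subst σ' r) :=
      subst_rstar fun y hy => hptw y (Or.inr hy)
    have hgl' : IsGround (subst σ' l) := ground_rstar hv_to hgr_v
    have hgr' : IsGround (subst σ' r) := ground_rstar hu_to hgr_u
    by_cases heq : subst σ' l = subst σ' r
    · exact ⟨subst σ' r, hu_to, heq ▸ hv_to⟩
    · rcases hgt _ _ hgl' hgr' heq with hgg | hgg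
      · -- l σ' > r σ'
        have hstep : Rew S (subst σ' l) (subst σ' r) :=
          rew_of_rootstep ⟨l, r, σ', hsym, rfl, rfl, hgg⟩
        exact ⟨subst σ' r, hu_to, hv_to.trans (Relation.ReflTransGen.single hstep)⟩
      · -- r σ' > l σ'
        have hstep : Rew S (subst σ' r) (subst σ' l) :=
          rew_of_rootstep ⟨r, l, σ', symcl_symm hsym, rfl, rfl, hgg⟩
        exact ⟨subst σ' l, hu_to.trans (Relation.ReflTransGen.single hstep), hv_to⟩
  · -- critical overlap case
    set V : Finset ℕ := (vars l₁ ∪ vars r₁) ∪ (vars l ∪ vars r) with hV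
    set N : ℕ := V.sup id + 1 with hN
    have hNbound : ∀ y ∈ V, y < N := by
      intro y hy
      have h2 : y ≤ V.sup id := Finset.le_sup (f := id) hy
      omega
    have hVl₁ : ∀ y, Occurs y l₁ → y < N := fun y hy =>
      hNbound y (by rw [hV]; simp only [Finset.mem_union]; exact Or.inl (Or.inl (mem_vars.2 hy)))
    have hVr₁ : ∀ y, Occurs y r₁ → y < N := fun y hy =>
      hNbound y (by rw [hV]; simp only [Finset.mem_union]; exact Or.inl (Or.inr (mem_vars.2 hy)))
    have hVl : ∀ y, Occurs y l → y < N := fun y hy =>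
      hNbound y (by rw [hV]; simp only [Finset.mem_union]; exact Or.inr (Or.inl (mem_vars.2 hy)))
    have hVr : ∀ y, Occurs y r → y < N := fun y hy =>
      hNbound y (by rw [hV]; simp only [Finset.mem_union]; exact Or.inr (Or.inr (mem_vars.2 hy)))
    have hVl' : ∀ y, Occurs y l' → y < N := fun y hy => hVl y (occurs_of_subtAt hl' hy)
    set π₁ : ℕ → Term F := fun y => Term.var (swapPerm N y) with hπ₁
    set θ : ℕ → Term F := fun z => if z < N then σ z else τ (z - N) with hθ
    have key : ∀ t : Term F, (∀ y, Occurs y t → y < N) →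
        subst θ (subst π₁ t) = subst τ t := by
      intro t ht
      rw [subst_comp]
      refine subst_congr fun y hy => ?_
      have hyN := ht y hy
      rw [hπ₁]
      simp only [subst_var_def, swapPerm_apply]
      rw [hθ]
      simp only [swapFun, if_pos hyN]
      rw [if_neg (by omega)]
      congr 1
      omega
    have keyb : ∀ t : Term F, (∀ y, Occurs y t → y < N) → subst θ t = subst σ t := by
      intro t ht
      refine subst_congr fun y hy => ?_
      rw [hθ]
      simp only [if_pos (ht y hy)]
    have hθunif : subst θ (subst π₁ l₁) = subst θ l' := by
      rw [key l₁ hVl₁, keyb l' hVl', hsl', hd]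
    obtain ⟨μ, hμ1, hμ2⟩ := mgu_exists ⟨θ, hθunif⟩
    obtain ⟨δ, hδ0⟩ := hμ2 θ hθunif
    have hδ : ∀ t : Term F, subst θ t = subst δ (subst μ t) := by
      intro t
      rw [subst_comp]
      exact subst_congr fun z _ => hδ0 z
    set l₂c : Term F := replF p l (subst π₁ r₁) with hl₂cdef
    have hl₂c : ReplAt l p (subst π₁ r₁) l₂c := replF_replAt hl' _
    have hvc : v = subst δ (subst μ l₂c) := by
      have h1 : ReplAt (subst θ l) p (subst θ (subst π₁ r₁)) (subst θ l₂c) :=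
        replAt_subst θ hl₂c
      rw [keyb l hVl, key r₁ hVr₁, ← hsdef, ← he] at h1
      rw [← hδ]
      exact replAt_det hrepl h1
    have huc : u = subst δ (subst μ r) := by
      rw [← hδ, keyb r hVr]
    have hecp : (subst μ l₂c, subst μ r) ∈ ECP ro.gt E := by
      refine ⟨(l₁, r₁), (l, r), π₁, Term.var, μ, p, l', l₂c, hsym₁, hsym, ⟨swapPerm N, fun _ => rfl⟩,
        ⟨Equiv.refl ℕ, fun _ => rfl⟩, ?_, ?_, hnv, hμ1, hμ2, ?_, ?_, ?_, ?_⟩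
      · -- variable disjointness
        intro y hy hy2
        have hyge : N ≤ y := by
          rcases hy with hy | hy
          · obtain ⟨z, hz, hz2⟩ := occurs_subst hy
            rw [hπ₁] at hz2
            cases hz2
            simp only [swapPerm_apply, swapFun]
            rw [if_pos (hVl₁ z hz)]
            omega
          · obtain ⟨z, hz, hz2⟩ := occurs_subst hy
            rw [hπ₁] at hz2
            cases hz2
            simp only [swapPerm_apply, swapFun]
            rw [if_pos (hVr₁ z hz)]
            omega
        have hylt : y < N := by
          rcases hy2 with hy2 | hy2 <;> rw [subst_id] at hy2
          · exact hVl y hy2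
          · exact hVr y hy2
        omega
      · -- SubtAt (subst π₂ l) p l'
        show SubtAt (subst Term.var l) p l'
        rw [subst_id]
        exact hl'
      · -- orientation 1
        intro hcon
        have := ro.subst_mono δ hcon
        rw [← hδ, ← hδ, key r₁ hVr₁, key l₁ hVl₁, ← hd, ← he] at this
        exact gt_asymm ro hde this
      · -- orientation 2
        show ¬ ro.gt (subst μ (subst Term.var r)) (subst μ (subst Term.var l))
        rw [subst_id, subst_id]
        intro hcon
        have := ro.subst_mono δ hcon
        rw [← hδ, ← hδ, keyb r hVr, keyb l hVl] at this
        exact gt_asymm ro hlr this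
      · -- ReplAt
        show ReplAt (subst Term.var l) p (subst π₁ r₁) l₂c
        rw [subst_id]
        exact hl₂c
      · -- the pair
        show (subst μ l₂c, subst μ r) = (subst μ l₂c, subst μ (subst Term.var r))
        rw [subst_id]
    rcases hcp _ _ hecp with hjoin | ⟨s', t', hsym', γ, hs', ht'⟩
    · have := joinable_subst δ hjoin
      rw [← hvc, ← huc] at this
      exact joinable_symm this
    · have hvv : v = subst (fun z => subst δ (γ z)) s' := by
        rw [hvc, hs', subst_comp]
      have huu : u = subst (fun z => subst δ (γ z)) t' := by
        rw [huc, ht', subst_comp]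
      by_cases heq : u = v
      · exact ⟨v, heq ▸ Relation.ReflTransGen.refl, Relation.ReflTransGen.refl⟩
      · rcases hgt _ _ hgr_u hgr_v heq with hgg | hgg
        · -- u > v
          have hstep : Rew S u v :=
            rew_of_rootstep ⟨t', s', fun z => subst δ (γ z), symcl_symm hsym', huu, hvv, hgg⟩
          exact ⟨v, Relation.ReflTransGen.single hstep, Relation.ReflTransGen.refl⟩
        · -- v > u
          have hstep : Rew S v u :=
            rew_of_rootstep ⟨s', t', fun z => subst δ (γ z), hsym', hvv, huu, hgg⟩
          exact ⟨u, Relation.ReflTransGen.refl, Relation.ReflTransGen.single hstep⟩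

end MainLemmas

section Confluence
variable {F : Type}

theorem append_mid {α : Type _} : ∀ {as as' : List α} {s₀ s₁ : α} {bs bs' : List α},
    as ++ s₀ :: bs = as' ++ s₁ :: bs' → as.length < as'.length →
    ∃ mid, as' = as ++ s₀ :: mid ∧ bs = mid ++ s₁ :: bs' := by
  intro as
  induction as with
  | nil =>
      intro as' s₀ s₁ bs bs' heq hlen
      cases as' with
      | nil => simp at hlen
      | cons a' as'' =>
          rw [List.nil_append, List.cons_append] at heq
          injection heq with h1 h2
          subst h1
          exact ⟨as'', rfl, h2⟩
  | cons a as ih =>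
      intro as' s₀ s₁ bs bs' heq hlen
      cases as' with
      | nil => simp at hlen
      | cons a' as'' =>
          rw [List.cons_append, List.cons_append] at heq
          injection heq with h1 h2
          subst h1
          simp only [List.length_cons, Nat.add_lt_add_iff_right] at hlen
          obtain ⟨mid, hm1, hm2⟩ := ih h2 hlen
          exact ⟨mid, by rw [hm1, List.cons_append], hm2⟩


theorem disjoint_slots {S : Set (Term F × Term F)} {f : F}
    {as bs as' bs' : List (Term F)} {s₀ s₁ u₀ v₁ : Term F}
    (heq : as ++ s₀ :: bs = as' ++ s₁ :: bs') (hlen : as.length < as'.length)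
    (h1 : Rew S s₀ u₀) (h2 : Rew S s₁ v₁) :
    Joinable S (Term.fn f (as ++ u₀ :: bs)) (Term.fn f (as' ++ v₁ :: bs')) := by
  obtain ⟨mid, hm1, hm2⟩ := append_mid heq hlen
  subst hm1; subst hm2
  refine ⟨Term.fn f (as ++ u₀ :: (mid ++ v₁ :: bs')), ?_, ?_⟩
  · refine Relation.ReflTransGen.single ?_
    have := Rew.ctxt (f := f) (as := as ++ u₀ :: mid) (bs := bs') h2
    rwa [List.append_assoc, List.cons_append, List.append_assoc, List.cons_append] at this
  · refine Relation.ReflTransGen.single ?_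
    rw [List.append_assoc, List.cons_append]
    exact Rew.ctxt (f := f) (as := as) (bs := mid ++ v₁ :: bs') h1

theorem local_conf (ro : RedOrder F) (hgt : GroundTotal ro.gt) (E : Set (Term F × Term F))
    (hcp : ∀ s t : Term F, (s, t) ∈ ECP ro.gt E →
      Joinable (ordInst ro.gt E) s t ∨
      ∃ s' t' : Term F, (s', t') ∈ symcl E ∧
        ∃ σ : ℕ → Term F, s = subst σ s' ∧ t = subst σ t') :
    ∀ (n : ℕ) (s : Term F), size s ≤ n → IsGround s → ∀ u v : Term F,
      Rew (ordInst ro.gt E) s u → Rew (ordInst ro.gt E) s v →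
      Joinable (ordInst ro.gt E) u v := by
  intro n
  induction n using Nat.strong_induction_on with
  | _ n ihn =>
  intro s hsz hg u v h1 h2
  cases h1 with
  | @rule l₀ r₀ hmem σ₀ =>
      obtain ⟨l, r, κ, hsym, hl, hr, hgt'⟩ := rule_normal hmem
      have hsl : subst σ₀ l₀ = subst (fun z => subst σ₀ (κ z)) l := by rw [hl, subst_comp]
      have hsr : subst σ₀ r₀ = subst (fun z => subst σ₀ (κ z)) r := by rw [hr, subst_comp]
      have hgt2 : ro.gt (subst (fun z => subst σ₀ (κ z)) l)
          (subst (fun z => subst σ₀ (κ z)) r) := by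
        rw [← hsl, ← hsr]
        exact ro.subst_mono σ₀ hgt'
      rw [hsl] at h2 hg
      rw [hsr]
      exact root_peak ro hgt E hcp hsym hgt2 hg h2
  | @ctxt s₀ u₀ f as bs h1' =>
      generalize hs2 : Term.fn f (as ++ s₀ :: bs) = s2 at h2
      cases h2 with
      | @rule l₀ r₀ hmem σ₀ =>
          obtain ⟨l, r, κ, hsym, hl, hr, hgt'⟩ := rule_normal hmem
          have hsl : subst σ₀ l₀ = subst (fun z => subst σ₀ (κ z)) l := by rw [hl, subst_comp]
          have hsr : subst σ₀ r₀ = subst (fun z => subst σ₀ (κ z)) r := by rw [hr, subst_comp]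
          have hgt2 : ro.gt (subst (fun z => subst σ₀ (κ z)) l)
              (subst (fun z => subst σ₀ (κ z)) r) := by
            rw [← hsl, ← hsr]
            exact ro.subst_mono σ₀ hgt'
          have hstep1 : Rew (ordInst ro.gt E) (subst (fun z => subst σ₀ (κ z)) l)
              (Term.fn f (as ++ u₀ :: bs)) := by
            have hh := Rew.ctxt f as bs h1'
            rwa [hs2, hsl] at hh
          have hgnd : IsGround (subst (fun z => subst σ₀ (κ z)) l) := by
            rw [← hsl, ← hs2]
            exact hg
          have hj := root_peak ro hgt E hcp hsym hgt2 hgnd hstep1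
          rw [hsr]
          exact joinable_symm hj
      | @ctxt s₁ v₁ f' as' bs' h2' =>
          injection hs2 with hf hlist
          subst hf
          rcases Nat.lt_trichotomy as.length as'.length with hlt | hleq | hlt
          · exact disjoint_slots hlist hlt h1' h2'
          · obtain ⟨h3, h4⟩ := List.append_inj hlist hleq
            injection h4 with h5 h6
            subst h3; subst h5; subst h6
            have hg0 : IsGround s₀ := by
              cases hg with | fn _ _ hgm => exact hgm s₀ (by simp)
            have hsz0 : size s₀ < n := by
              have h7 := sizeL_mem (t := s₀) (ts := as ++ s₀ :: bs) (by simp)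
              rw [size] at hsz
              omega
            obtain ⟨w0, hw1, hw2⟩ := ihn (size s₀) hsz0 s₀ (le_refl _) hg0 u₀ v₁ h1' h2'
            exact ⟨Term.fn f (as ++ w0 :: bs), rstar_ctxt_slot f as bs hw1,
              rstar_ctxt_slot f as bs hw2⟩
          · exact joinable_symm (disjoint_slots hlist.symm hlt h2' h1')

end Confluence

section Newman
variable {F : Type}

theorem newman_ground (ro : RedOrder F) (hgt : GroundTotal ro.gt)
    (E : Set (Term F × Term F))
    (hcp : ∀ s t : Term F, (s, t) ∈ ECP ro.gt E →
      Joinable (ordInst ro.gt E) s t ∨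
      ∃ s' t' : Term F, (s', t') ∈ symcl E ∧
        ∃ σ : ℕ → Term F, s = subst σ s' ∧ t = subst σ t') :
    ∀ s : Term F, IsGround s → ∀ u v : Term F,
      RStar (ordInst ro.gt E) s u → RStar (ordInst ro.gt E) s v →
      Joinable (ordInst ro.gt E) u v := by
  intro s
  induction s using ro.wf.induction with
  | _ s ih =>
  intro hg u v h1 h2
  rcases Relation.ReflTransGen.cases_head h1 with rfl | ⟨s₁, hs1, h1'⟩
  · exact ⟨v, h2, Relation.ReflTransGen.refl⟩
  rcases Relation.ReflTransGen.cases_head h2 with rfl | ⟨s₂, hs2, h2'⟩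
  · exact ⟨u, Relation.ReflTransGen.refl, h1⟩
  obtain ⟨w, hw1, hw2⟩ := local_conf ro hgt E hcp (size s) s (le_refl _) hg s₁ s₂ hs1 hs2
  have hg1 : IsGround s₁ := ground_rew hs1 hg
  have hg2 : IsGround s₂ := ground_rew hs2 hg
  obtain ⟨w₁, hu, hww⟩ := ih s₁ (rew_gt hs1) hg1 u w h1' hw1
  obtain ⟨z, hvz, hwz⟩ := ih s₂ (rew_gt hs2) hg2 v w₁ h2' (hw2.trans hww)
  exact ⟨z, hu.trans hwz, hvz⟩

end Newman

-- INSERT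

/-- ground confluence criterion via extended critical pairs. -/
theorem ground_confluent_of_ECP {F : Type} (ro : RedOrder F)
    (hgt : GroundTotal ro.gt) (E : Set (Term F × Term F))
    (hE : ∀ s t : Term F, (s, t) ∈ E → ro.gt s t ∨ (t, s) ∈ E)
    (hcp : ∀ s t : Term F, (s, t) ∈ ECP ro.gt E →
      Joinable (ordInst ro.gt E) s t ∨
      ∃ s' t' : Term F, (s', t') ∈ symcl E ∧
        ∃ σ : ℕ → Term F, s = subst σ s' ∧ t = subst σ t') :
    ∀ t u v : Term F, IsGround t →
      RStar (ordInst ro.gt E) t u → RStar (ordInst ro.gt E) t v →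
      Joinable (ordInst ro.gt E) u v := by
  intro t u v hg h1 h2
  exact newman_ground ro hgt E hcp t hg u v h1 h2
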